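/- Let P ∈ 𝔽₂^{n×N} be the single block row with E_n in block u_0 and zero elsewhere, and P_ob ∈ 𝔽₂^{n_G×N} the single block row with E_{n_G} in the open-boundary block u_{d_R−1} and zero elsewhere, where N is the total number of columns of the branch-sticker deformed code. Assume H_X Sᵀ = T H_G, and suppose J_G ∈ 𝔽₂^{q×n_G} satisfies rs J_G ⊆ ker H_G and J_G S = J_{Z,A}, where J_{Z,A} consists of the first q rows of J_Z. Then: (i) rs H_X = rs(H^{MB}_X Pᵀ); (ii) rs(H_Z P) ⊆ rs H^{MB}_Z; (iii) rs J_X = rs(J^{MB}_X Pᵀ); (iv) rs(J_Z P) = rs J^{MB}_Z; (v) rs(J_{Z,A} P + J_G P_ob) ⊆ rs H^{MB}_Z. In particular, by (v), each measured logical operator is, modulo Z stabilisers of the deformed code, transferred to the open boundary of the branch sticker. -/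

import Mathlib

open Matrix

/-- The `X`-check matrix of the branch-sticker deformed code, with `d_R = m + 1`.
Column blocks: `u_0` (`Fin n`), `u_1,…,u_m` (`Fin m × Fin nG`, index `j0` is `u_{j0+1}`;
`u_m = u_{d_R-1}` is the open boundary), `v_1,…,v_m` (`Fin m × Fin rG`, index `i0` is
`v_{i0+1}`). -/
def HMBX (m : ℕ) {n nG rX rG : ℕ} (HX : Matrix (Fin rX) (Fin n) (ZMod 2))
    (HG : Matrix (Fin rG) (Fin nG) (ZMod 2))
    (T : Matrix (Fin rX) (Fin rG) (ZMod 2)) :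
    Matrix (Fin rX ⊕ Fin m × Fin rG)
      (Fin n ⊕ (Fin m × Fin nG ⊕ Fin m × Fin rG)) (ZMod 2) :=
  Matrix.of fun r c =>
    match r, c with
    | Sum.inl a, Sum.inl j => HX a j
    | Sum.inl _, Sum.inr (Sum.inl _) => 0
    | Sum.inl a, Sum.inr (Sum.inr (i, b)) => if (i : ℕ) = 0 then T a b else 0
    | Sum.inr _, Sum.inl _ => 0
    | Sum.inr (j0, a), Sum.inr (Sum.inl (j', c')) => if j' = j0 then HG a c' else 0
    | Sum.inr (j0, a), Sum.inr (Sum.inr (i, b)) =>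
        if ((i : ℕ) = (j0 : ℕ) ∨ (i : ℕ) = (j0 : ℕ) + 1) ∧ b = a then 1 else 0

/-- The `Z`-check matrix of the branch-sticker deformed code, with `d_R = m + 1`.
Row blocks: memory `Z` checks (`Fin rZ`) and sticker `Z` checks `i = 1,…,m`
(`Fin m × Fin nG`, index `i0` is check row `i0+1`). -/
def HMBZ (m : ℕ) {n nG rZ rG : ℕ} (HZ : Matrix (Fin rZ) (Fin n) (ZMod 2))
    (HG : Matrix (Fin rG) (Fin nG) (ZMod 2))
    (S : Matrix (Fin nG) (Fin n) (ZMod 2)) :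
    Matrix (Fin rZ ⊕ Fin m × Fin nG)
      (Fin n ⊕ (Fin m × Fin nG ⊕ Fin m × Fin rG)) (ZMod 2) :=
  Matrix.of fun r c =>
    match r, c with
    | Sum.inl a, Sum.inl j => HZ a j
    | Sum.inl _, Sum.inr _ => 0
    | Sum.inr (i, cc), Sum.inl j => if (i : ℕ) = 0 then S cc j else 0
    | Sum.inr (i, cc), Sum.inr (Sum.inl (j0, c')) =>
        if ((j0 : ℕ) + 1 = (i : ℕ) ∨ (j0 : ℕ) = (i : ℕ)) ∧ c' = cc then 1 else 0
    | Sum.inr (i, cc), Sum.inr (Sum.inr (i', b)) =>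
        if (i' : ℕ) = (i : ℕ) then HG b cc else 0


/-- The `X` logical generator matrix of the branch-sticker deformed code:
`J_X` in block `u_0`, `J_X Sᵀ` in each block `u_j`, zero in all `v` blocks. -/
def JMBX (m : ℕ) {n nG rG k : ℕ} (JX : Matrix (Fin k) (Fin n) (ZMod 2))
    (S : Matrix (Fin nG) (Fin n) (ZMod 2)) :
    Matrix (Fin k) (Fin n ⊕ (Fin m × Fin nG ⊕ Fin m × Fin rG)) (ZMod 2) :=
  Matrix.of fun a c =>
    match c with
    | Sum.inl j => JX a j
    | Sum.inr (Sum.inl (_, c')) => (JX * Sᵀ) a c'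
    | Sum.inr (Sum.inr _) => 0

/-- The `Z` logical generator matrix of the branch-sticker deformed code:
`J_Z` in block `u_0`, zero elsewhere. -/
def JMBZ (m nG rG : ℕ) {n k : ℕ} (JZ : Matrix (Fin k) (Fin n) (ZMod 2)) :
    Matrix (Fin k) (Fin n ⊕ (Fin m × Fin nG ⊕ Fin m × Fin rG)) (ZMod 2) :=
  Matrix.of fun a c =>
    match c with
    | Sum.inl j => JZ a j
    | Sum.inr _ => 0

/-- The row space (𝔽₂-span of the rows) of a matrix. -/
def rowSpan {ι κ : Type*} (A : Matrix ι κ (ZMod 2)) :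
    Submodule (ZMod 2) (κ → ZMod 2) :=
  Submodule.span (ZMod 2) (Set.range A)

/-- The block-row matrix `P` with `E_n` in block `u_0` and zero elsewhere
(branch-sticker deformed code). -/
def PMB (m nG rG : ℕ) {n : ℕ} :
    Matrix (Fin n) (Fin n ⊕ (Fin m × Fin nG ⊕ Fin m × Fin rG)) (ZMod 2) :=
  Matrix.of fun a c =>
    match c with
    | Sum.inl j => if j = a then 1 else 0
    | Sum.inr _ => 0

/-- The block-row matrix `P_ob` with `E_{n_G}` in the open-boundary block
`u_{d_R−1} = u_m` and zero elsewhere (branch-sticker deformed code). -/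
def Pob (m nG rG : ℕ) {n : ℕ} :
    Matrix (Fin nG) (Fin n ⊕ (Fin m × Fin nG ⊕ Fin m × Fin rG)) (ZMod 2) :=
  Matrix.of fun a c =>
    match c with
    | Sum.inl _ => 0
    | Sum.inr (Sum.inl (j0, c')) => if (j0 : ℕ) + 1 = m ∧ c' = a then 1 else 0
    | Sum.inr (Sum.inr _) => 0

lemma mul_apply_F2 {l m' o R : Type*} [Fintype m'] [Mul R] [AddCommMonoid R] (A : Matrix l m' R)
    (B : Matrix m' o R) (i : l) (j : o) :
    (@HMul.hMul (Matrix l m' R) (Matrix m' o R) (Matrix l o R)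
      CStarMatrix.instHMulOfFintypeOfMulOfAddCommMonoid A B) i j = ∑ k, A i k * B k j := rfl

lemma row_mem_rowSpan {ι κ : Type*} (A : Matrix ι κ (ZMod 2)) (i : ι) :
    A i ∈ rowSpan A :=
  Submodule.subset_span ⟨i, rfl⟩

lemma rowSpan_le_of_rows {ι ι' κ : Type*} (A : Matrix ι κ (ZMod 2))
    (B : Matrix ι' κ (ZMod 2)) (h : ∀ i, B i ∈ rowSpan A) :
    rowSpan B ≤ rowSpan A := by
  rw [rowSpan, Submodule.span_le]
  rintro _ ⟨i, rfl⟩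
  exact h i

lemma vecMul_mem_rowSpan {ι κ : Type*} [Fintype ι] [DecidableEq ι]
    (A : Matrix ι κ (ZMod 2)) (y : ι → ZMod 2) :
    Matrix.vecMul y A ∈ rowSpan A := by
  have : Matrix.vecMul y A = ∑ r, y r • A r := by
    ext j
    simp [Matrix.vecMul, dotProduct, Finset.sum_apply]
  rw [this]
  exact Submodule.sum_mem _ fun r _ =>
    Submodule.smul_mem _ _ (row_mem_rowSpan A r)

lemma mul_PMB_transpose {m nG rG n : ℕ} {ι : Type*}
    (A : Matrix ι (Fin n ⊕ (Fin m × Fin nG ⊕ Fin m × Fin rG)) (ZMod 2)) :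
    A * (PMB m nG rG)ᵀ = Matrix.of fun r a => A r (Sum.inl a) := by
  ext r a
  simp [Matrix.mul_apply, mul_apply_F2, PMB, Fintype.sum_sum_type, mul_ite,
    Finset.sum_ite_eq]

lemma mul_PMB {m nG rG n : ℕ} {ι : Type*}
    (B : Matrix ι (Fin n) (ZMod 2)) :
    B * PMB m nG rG = Matrix.of fun r c =>
      match c with
      | Sum.inl j => B r j
      | Sum.inr _ => 0 := by
  ext r c
  rcases c with j | c <;>
    simp [Matrix.mul_apply, mul_apply_F2, PMB, mul_ite, Finset.sum_ite_eq']

/-- relations between memory operators and branch-sticker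
deformed-code operators. In particular, by (v), each measured logical operator is,
modulo `Z` stabilisers of the deformed code, transferred to the open boundary of
the branch sticker. -/
theorem branch_sticker_operator_relations (m : ℕ) (hm : 1 ≤ m)
    {n nG rX rZ rG k q : ℕ}
    (HX : Matrix (Fin rX) (Fin n) (ZMod 2))
    (HZ : Matrix (Fin rZ) (Fin n) (ZMod 2))
    (HG : Matrix (Fin rG) (Fin nG) (ZMod 2))
    (S : Matrix (Fin nG) (Fin n) (ZMod 2))
    (T : Matrix (Fin rX) (Fin rG) (ZMod 2))
    (JX JZ : Matrix (Fin k) (Fin n) (ZMod 2))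
    (JZA : Matrix (Fin q) (Fin n) (ZMod 2))
    (JG : Matrix (Fin q) (Fin nG) (ZMod 2))
    (hcompat : HX * Sᵀ = T * HG)
    (hqk : q ≤ k)
    (hJZA : ∀ i : Fin q, JZA i = JZ (Fin.castLE hqk i))
    (hJGker : ∀ i : Fin q, HG.mulVec (JG i) = 0)
    (hJGS : JG * S = JZA) :
    rowSpan HX = rowSpan (HMBX m HX HG T * (PMB m nG rG)ᵀ) ∧
      rowSpan (HZ * PMB m nG rG) ≤ rowSpan (HMBZ m HZ HG S) ∧
      rowSpan JX = rowSpan (JMBX m JX S (rG := rG) * (PMB m nG rG)ᵀ) ∧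
      rowSpan (JZ * PMB m nG rG) = rowSpan (JMBZ m nG rG JZ) ∧
      rowSpan (JZA * PMB m nG rG + JG * Pob m nG rG) ≤ rowSpan (HMBZ m HZ HG S) := by

  classical
  refine ⟨?_, ?_, ?_, ?_, ?_⟩
  · -- (i)
    rw [mul_PMB_transpose]
    apply le_antisymm
    · apply rowSpan_le_of_rows
      intro a
      have h : HX a =
          (Matrix.of fun r b => HMBX m HX HG T r (Sum.inl b)) (Sum.inl a) := by
        funext j; rfl
      rw [h]
      exact row_mem_rowSpan _ _
    · apply rowSpan_le_of_rows
      rintro (a | p)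
      · have h : (Matrix.of fun r b => HMBX m HX HG T r (Sum.inl b)) (Sum.inl a)
            = HX a := by funext j; rfl
        rw [h]
        exact row_mem_rowSpan _ _
      · have h : (Matrix.of fun r b => HMBX m HX HG T r (Sum.inl b)) (Sum.inr p)
            = 0 := by funext j; rfl
        rw [h]
        exact Submodule.zero_mem _
  · -- (ii)
    apply rowSpan_le_of_rows
    intro a
    have h : (HZ * PMB m nG rG :
        Matrix (Fin rZ) (Fin n ⊕ (Fin m × Fin nG ⊕ Fin m × Fin rG)) (ZMod 2)) a
        = HMBZ m HZ HG S (Sum.inl a) := by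
      funext c
      rcases c with j | (p | p) <;>
        simp [Matrix.mul_apply, mul_apply_F2, PMB, HMBZ, mul_ite, Finset.sum_ite_eq']
    rw [h]
    exact row_mem_rowSpan _ _
  · -- (iii)
    rw [mul_PMB_transpose]
    congr 1
  · -- (iv)
    congr 1
    ext r c
    rcases c with j | (p | p) <;>
      simp [Matrix.mul_apply, mul_apply_F2, PMB, JMBZ, mul_ite, Finset.sum_ite_eq']
  · -- (v)
    apply rowSpan_le_of_rows
    intro i
    set y : Fin rZ ⊕ Fin m × Fin nG → ZMod 2 :=
      Sum.elim 0 (fun p : Fin m × Fin nG => JG i p.2) with hy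
    have key : (JZA * PMB m nG rG + JG * Pob m nG rG :
        Matrix (Fin q) (Fin n ⊕ (Fin m × Fin nG ⊕ Fin m × Fin rG)) (ZMod 2)) i =
        Matrix.vecMul y (HMBZ m HZ HG S) := by
      funext c
      have hL : (JZA * PMB m nG rG + JG * Pob m nG rG :
          Matrix (Fin q) (Fin n ⊕ (Fin m × Fin nG ⊕ Fin m × Fin rG)) (ZMod 2)) i c =
          (JZA * PMB m nG rG :
          Matrix (Fin q) (Fin n ⊕ (Fin m × Fin nG ⊕ Fin m × Fin rG)) (ZMod 2)) i c +
          (JG * Pob m nG rG :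
          Matrix (Fin q) (Fin n ⊕ (Fin m × Fin nG ⊕ Fin m × Fin rG)) (ZMod 2)) i c := rfl
      have hR : Matrix.vecMul y (HMBZ m HZ HG S) c =
          ∑ p : Fin m × Fin nG, JG i p.2 * HMBZ m HZ HG S (Sum.inr p) c := by
        rw [Matrix.vecMul]
        show ∑ r, y r * HMBZ m HZ HG S r c = _
        rw [Fintype.sum_sum_type]
        simp [hy]
      rw [hL, hR, Fintype.sum_prod_type_right]
      rcases c with j | (⟨j0, c'⟩ | ⟨i'', b⟩)
      · -- u_0 block
        have h0 : ∀ i' : Fin m, ((i' : ℕ) = 0) ↔ (i' = ⟨0, hm⟩) := by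
          intro i'; simp [Fin.ext_iff]
        simp only [HMBZ, Matrix.of_apply, h0, mul_ite, mul_zero,
          Finset.sum_ite_eq', Finset.mem_univ, if_pos trivial]
        rw [show (∑ x : Fin nG, JG i x * S x j) = (JG * S) i j from
          (Matrix.mul_apply).symm, hJGS]
        simp [Matrix.mul_apply, mul_apply_F2, PMB, Pob, mul_ite, Finset.sum_ite_eq']
      · -- u blocks
        have hsplit : ∀ (i' : Fin m) (cc : Fin nG),
            JG i cc * HMBZ m HZ HG S (Sum.inr (i', cc)) (Sum.inr (Sum.inl (j0, c'))) =
            (if ((j0 : ℕ) + 1 = (i' : ℕ) ∧ c' = cc) then JG i cc else 0) +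
            (if ((j0 : ℕ) = (i' : ℕ) ∧ c' = cc) then JG i cc else 0) := by
          intro i' cc
          rcases eq_or_ne ((j0 : ℕ) + 1) (i' : ℕ) with h1 | h1
          · have h2 : ¬ ((j0 : ℕ) = (i' : ℕ)) := by omega
            by_cases h3 : c' = cc <;> simp [HMBZ, h1, h2, h3]
          · by_cases h2 : (j0 : ℕ) = (i' : ℕ) <;> by_cases h3 : c' = cc <;>
              simp [HMBZ, h1, h2, h3]
        have hterm2 : (∑ cc : Fin nG, ∑ i' : Fin m,
            if ((j0 : ℕ) = (i' : ℕ) ∧ c' = cc) then JG i cc else 0) = JG i c' := by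
          have e : ∀ i' : Fin m, ((j0 : ℕ) = (i' : ℕ)) ↔ i' = j0 := by
            intro i'; simp [Fin.ext_iff, eq_comm]
          simp [e, ite_and, Finset.sum_ite_eq', Finset.sum_ite_eq]
        have hterm1 : (∑ cc : Fin nG, ∑ i' : Fin m,
            if ((j0 : ℕ) + 1 = (i' : ℕ) ∧ c' = cc) then JG i cc else 0) =
            if (j0 : ℕ) + 1 = m then 0 else JG i c' := by
          by_cases hj : (j0 : ℕ) + 1 = m
          · rw [if_pos hj]
            refine Finset.sum_eq_zero fun cc _ => Finset.sum_eq_zero fun i' _ => ?_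
            have hne : ¬ ((j0 : ℕ) + 1 = (i' : ℕ)) := by have := i'.isLt; omega
            simp [hne]
          · rw [if_neg hj]
            have hlt : (j0 : ℕ) + 1 < m := by have := j0.isLt; omega
            have e : ∀ i' : Fin m, ((j0 : ℕ) + 1 = (i' : ℕ)) ↔
                i' = ⟨(j0 : ℕ) + 1, hlt⟩ := by
              intro i'; simp [Fin.ext_iff, eq_comm]
            simp [e, ite_and, Finset.sum_ite_eq', Finset.sum_ite_eq]
        simp only [hsplit, Finset.sum_add_distrib]
        rw [hterm1, hterm2]
        by_cases hj : (j0 : ℕ) + 1 = m <;>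
          simp [hj, Matrix.mul_apply, mul_apply_F2, PMB, Pob, mul_ite, ite_and,
            Finset.sum_ite_eq, Finset.sum_ite_eq', CharTwo.add_self_eq_zero]
      · -- v blocks
        have hi : ∀ i' : Fin m, ((i'' : ℕ) = (i' : ℕ)) ↔ (i' = i'') := by
          intro i'; simp [Fin.ext_iff, eq_comm]
        simp only [HMBZ, Matrix.of_apply, hi, mul_ite, mul_zero,
          Finset.sum_ite_eq', Finset.mem_univ, if_pos trivial]
        have hk : ∑ cc : Fin nG, JG i cc * HG b cc = 0 := by
          have h1 := congrFun (hJGker i) b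
          simp only [Matrix.mulVec, dotProduct, Pi.zero_apply] at h1
          rw [← h1]
          exact Finset.sum_congr rfl fun cc _ => mul_comm _ _
        rw [hk]
        simp [Matrix.mul_apply, mul_apply_F2, PMB, Pob]
    rw [key]
    exact vecMul_mem_rowSpan _ _
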